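/- Let E be the sharp observable E(n) = |n⟩⟨n| (n = 1,2,3) on ℂ³, and let A, B be its coarse-grainings A(1) = E(1), A(2) = E(2)+E(3), B(1) = E(1)+E(2), B(2) = E(3). Then E is not a post-processing of any convex combination of post-processings of A and B: there do not exist stochastic matrices μ_i and weights t_i ≥ 0 summing to 1 with E = Σ_i t_i μ_i ∘ C_i where each C_i ∈ {A, B}. (Proof idea: every operator in the range of such a combination is a nonnegative combination of A(1), A(2), B(1), B(2); a rank-1 projection E(i) cannot equal a nonnegative combination involving the rank-2 effects with positive weight in the required way.) -/

import Mathlib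

open Matrix

/-- The rank-one projections `E(n) = |n⟩⟨n|` on `ℂ³`. -/
def E (n : Fin 3) : Matrix (Fin 3) (Fin 3) ℂ := Matrix.single n n 1

/-- The coarse-graining `A(1) = E(1), A(2) = E(2) + E(3)`. -/
def A : Fin 2 → Matrix (Fin 3) (Fin 3) ℂ := fun ω => if ω = 0 then E 0 else E 1 + E 2

/-- The coarse-graining `B(1) = E(1) + E(2), B(2) = E(3)`. -/
def B : Fin 2 → Matrix (Fin 3) (Fin 3) ℂ := fun ω => if ω = 0 then E 0 + E 1 else E 2

lemma E_apply (n d : Fin 3) : E n d d = if n = d then 1 else 0 := by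
  by_cases h : n = d
  · subst h; simp [E, Matrix.single_apply_same]
  · simp [E, Matrix.single, h, Ne.symm h]

lemma ite_apply_mat (p : Prop) [Decidable p] (M N : Matrix (Fin 3) (Fin 3) ℂ) (d e : Fin 3) :
    (if p then M else N) d e = if p then M d e else N d e := by split <;> rfl

/-- The sharp observable `E` cannot be simulated by `{A, B}`: it is not a convex
combination of post-processings of `A` and `B`. -/
theorem E_not_simulable_by_A_B :
    ¬ ∃ (k : ℕ) (t : Fin k → ℝ) (μ : Fin k → Fin 3 → Fin 2 → ℝ) (c : Fin k → Bool),
      (∀ i, 0 ≤ t i) ∧ (∑ i, t i = 1) ∧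
      (∀ i ω' ω, 0 ≤ μ i ω' ω) ∧ (∀ i ω, ∑ ω', μ i ω' ω = 1) ∧
      (∀ n : Fin 3, E n =
        ∑ i, ∑ ω : Fin 2, ((t i * μ i n ω : ℝ) : ℂ) • (if c i then A ω else B ω)) := by
  rintro ⟨k, t, μ, c, ht, hts, hμ, hμs, hE⟩
  have h0 := congrArg (fun M => (M 0 0).re) (hE 1)
  have h1 := congrArg (fun M => (M 1 1).re) (hE 1)
  have h2 := congrArg (fun M => (M 2 2).re) (hE 1)
  simp [Matrix.sum_apply, Fin.sum_univ_two, Matrix.smul_apply, ite_apply_mat,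
    A, B, E_apply, Matrix.add_apply, Complex.re_sum, mul_ite, apply_ite Complex.re,
    Complex.ofReal_re] at h0 h1 h2
  have hb : ∀ i ∈ Finset.univ, (if c i = true then t i * μ i 1 1 else t i * μ i 1 0)
      ≤ t i * μ i 1 1 + t i * μ i 1 0 := by
    intro i _
    have a := mul_nonneg (ht i) (hμ i 1 0)
    have b := mul_nonneg (ht i) (hμ i 1 1)
    split <;> linarith
  have hle := Finset.sum_le_sum hb
  rw [Finset.sum_add_distrib] at hle
  linarith
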